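/- Let β be a real number with β ≥ (e + 2 − √2·(e−1)) / (√2 − 1), and let p ∈ H₁ with p(z) ≠ 0 for all z ∈ 𝔻. If the function z ↦ p(z) + β·z·p′(z)/p(z) is subordinate to z ↦ (2+2z)/(2−z) on 𝔻, then p is subordinate to z ↦ e^z on 𝔻. -/

import Mathlib

open Complex

noncomputable section

/-- The open unit disk in the complex plane. -/
def unitDisk : Set ℂ := Metric.ball 0 1

/-- `f` is subordinate to `g` on the open unit disk: there is an analytic
Schwarz function `w` with `w 0 = 0`, `‖w z‖ < 1` on the disk, and `f = g ∘ w`. -/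
def Subord (f g : ℂ → ℂ) : Prop :=
  ∃ w : ℂ → ℂ, DifferentiableOn ℂ w unitDisk ∧ w 0 = 0 ∧
    (∀ z ∈ unitDisk, ‖w z‖ < 1) ∧ ∀ z ∈ unitDisk, f z = g (w z)

open Metric Set intervalIntegral Filter Topology


lemma beta0_ge4 : (4:ℝ) ≤ (Real.exp 1 + 2 - Real.sqrt 2 * (Real.exp 1 - 1)) / (Real.sqrt 2 - 1) := by
  have hs2 : Real.sqrt 2 ^ 2 = 2 := Real.sq_sqrt (by norm_num)
  have hs2a : (1.414:ℝ) < Real.sqrt 2 := by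
    nlinarith [Real.sqrt_nonneg 2, hs2]
  have hs2b : Real.sqrt 2 < 1.415 := by
    nlinarith [Real.sqrt_nonneg 2, hs2]
  have he1 : (2.7182818283:ℝ) < Real.exp 1 := Real.exp_one_gt_d9
  have he2 : Real.exp 1 < 2.7182818286 := Real.exp_one_lt_d9
  rw [le_div_iff₀ (by linarith)]
  nlinarith

lemma key_ineq {ζ : ℂ} (hζ : ‖ζ‖ = 1) {s : ℝ} (hs : 4 ≤ s) :
    2 ≤ ‖Complex.exp ζ + (s:ℂ) * ζ - 2‖ := by
  set x := ζ.re with hx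
  set y := ζ.im with hy
  have hns : x^2 + y^2 = 1 := by
    have : Complex.normSq ζ = 1 := by
      rw [← Complex.sq_norm, hζ]; norm_num
    rw [Complex.normSq_apply] at this; nlinarith
  have hx1 : |x| ≤ 1 := by nlinarith [abs_nonneg x, _root_.sq_abs x, sq_nonneg y]
  have hy1 : |y| ≤ 1 := by nlinarith [abs_nonneg y, _root_.sq_abs y, sq_nonneg x]
  set w : ℂ := Complex.exp ζ + (s:ℂ) * ζ - 2 with hw
  have key : ((starRingEnd ℂ) ζ * w).re ≤ ‖w‖ := by
    calc ((starRingEnd ℂ) ζ * w).re ≤ ‖(starRingEnd ℂ) ζ * w‖ := Complex.re_le_norm _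
    _ = ‖ζ‖ * ‖w‖ := by rw [norm_mul, Complex.norm_conj]
    _ = ‖w‖ := by rw [hζ, one_mul]
  refine le_trans ?_ key
  have hre : ((starRingEnd ℂ) ζ * w).re
      = Real.exp x * (x * Real.cos y + y * Real.sin y) + s * (x^2 + y^2) - 2 * x := by
    simp only [hw, Complex.mul_re, Complex.conj_re, Complex.conj_im, Complex.sub_re,
      Complex.sub_im, Complex.add_re, Complex.add_im, Complex.mul_im, Complex.ofReal_re,
      Complex.ofReal_im, Complex.exp_re, Complex.exp_im, ← hx, ← hy]
    norm_num; ring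
  rw [hre, hns]
  -- facts
  have hcos0 : 0 ≤ Real.cos y := by
    apply Real.cos_nonneg_of_mem_Icc
    constructor <;> [nlinarith [Real.pi_gt_three, abs_le.1 hy1]; nlinarith [Real.pi_gt_three, abs_le.1 hy1]]
  have hcos1 : Real.cos y ≤ 1 := Real.cos_le_one y
  have hysin : 0 ≤ y * Real.sin y := by
    rcases le_or_gt 0 y with h | h
    · exact mul_nonneg h (Real.sin_nonneg_of_nonneg_of_le_pi h (by nlinarith [Real.pi_gt_three, abs_le.1 hy1]))
    · have : Real.sin y ≤ 0 := by
        have := Real.sin_nonneg_of_nonneg_of_le_pi (x := -y) (by linarith) (by nlinarith [Real.pi_gt_three, abs_le.1 hy1])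
        rw [Real.sin_neg] at this; linarith
      nlinarith
  have hexp : 0 < Real.exp x := Real.exp_pos x
  rcases le_or_gt 0 x with h | h
  · have h1 : 0 ≤ Real.exp x * (x * Real.cos y + y * Real.sin y) := by positivity
    have h2 : x ≤ 1 := (abs_le.1 hx1).2
    nlinarith
  · have hex1 : Real.exp x ≤ 1 := Real.exp_le_one_iff.mpr h.le
    have h0 : Real.exp x * Real.cos y ≤ 1 := by nlinarith
    have h1 : 0 ≤ (-x) * (1 - Real.exp x * Real.cos y) := mul_nonneg (by linarith) (by linarith)
    nlinarith [mul_nonneg hexp.le hysin]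



lemma mobius_bound {ω : ℂ} (hω : ‖ω‖ < 1) : ‖(2 + 2*ω)/(2 - ω) - 2‖ < 2 := by
  have hpos : (1:ℝ) < ‖(2:ℂ) - ω‖ := by
    have h2 : ‖(2:ℂ)‖ - ‖ω‖ ≤ ‖(2:ℂ) - ω‖ := norm_sub_norm_le (2:ℂ) ω
    have : ‖(2:ℂ)‖ = 2 := by norm_num
    linarith
  have hne : (2:ℂ) - ω ≠ 0 := by
    intro h; rw [h, norm_zero] at hpos; linarith
  have heq : (2 + 2*ω)/(2 - ω) - 2 = (4*ω - 2)/(2 - ω) := by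
    field_simp; ring
  rw [heq, norm_div, div_lt_iff₀ (by linarith : (0:ℝ) < ‖(2:ℂ) - ω‖)]
  have h1 : ‖4*ω - 2‖^2 < (2 * ‖(2:ℂ) - ω‖)^2 := by
    have e1 : ‖4*ω - 2‖^2 = Complex.normSq (4*ω - 2) := by
      rw [← Complex.sq_norm]
    have e2 : ‖(2:ℂ) - ω‖^2 = Complex.normSq (2 - ω) := by
      rw [← Complex.sq_norm]
    have hn : Complex.normSq ω < 1 := by
      rw [← Complex.sq_norm]
      nlinarith [norm_nonneg ω]
    rw [mul_pow, e1, e2]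
    simp only [Complex.normSq_apply, Complex.sub_re, Complex.sub_im, Complex.mul_re,
      Complex.mul_im, Complex.normSq_apply] at *
    norm_num at *
    nlinarith
  exact lt_of_pow_lt_pow_left₀ 2 (by positivity) h1


lemma exists_log {p : ℂ → ℂ} (hp : DifferentiableOn ℂ p unitDisk) (hp0 : p 0 = 1)
    (hpne : ∀ z ∈ unitDisk, p z ≠ 0) :
    ∃ g : ℂ → ℂ, g 0 = 0 ∧ ContinuousOn g unitDisk ∧
      (∀ z ∈ unitDisk, Complex.exp (g z) = p z) ∧
      (∀ z ∈ unitDisk, HasDerivAt g (deriv p z / p z) z) := by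
  have hopen : IsOpen unitDisk := isOpen_ball
  set h : ℂ → ℂ := fun z => deriv p z / p z with hh
  have hpan : AnalyticOnNhd ℂ p unitDisk := hp.analyticOnNhd hopen
  have han : AnalyticOnNhd ℂ h unitDisk := hpan.deriv.div hpan hpne
  have hcont : ContinuousOn h unitDisk := han.continuousOn
  have hhca : ∀ z ∈ unitDisk, ContinuousAt h z := fun z hz =>
    hcont.continuousAt (hopen.mem_nhds hz)
  -- membership of segment points
  have hmem : ∀ z ∈ unitDisk, ∀ t : ℝ, |t| ≤ 1 → (t:ℂ) * z ∈ unitDisk := by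
    intro z hz t ht
    simp only [unitDisk, mem_ball, dist_zero_right] at hz ⊢
    rw [norm_mul, Complex.norm_real, Real.norm_eq_abs]
    calc |t| * ‖z‖ ≤ 1 * ‖z‖ := by
          apply mul_le_mul_of_nonneg_right ht (norm_nonneg z)
      _ < 1 := by simpa using hz
  set g : ℂ → ℂ := fun z => ∫ t in (0:ℝ)..1, z * h ((t:ℂ) * z) with hg
  -- continuity of integrand in t
  have hφc : ∀ z : ℂ, ∀ t : ℝ, (t:ℂ) * z ∈ unitDisk →
      ContinuousAt (fun s : ℝ => z * h ((s:ℂ) * z)) t := by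
    intro z t ht
    have hin : ContinuousAt (fun s : ℝ => (s:ℂ) * z) t := by fun_prop
    exact continuousAt_const.mul (ContinuousAt.comp (g := h) (f := fun s : ℝ => (s:ℂ) * z) (hhca _ ht) hin)
  have hφcOn : ∀ z ∈ unitDisk, ContinuousOn (fun s : ℝ => z * h ((s:ℂ) * z)) (Icc (-1) 1) := by
    intro z hz
    intro t ht
    exact (hφc z t (hmem z hz t (abs_le.mpr ⟨ht.1, ht.2⟩))).continuousWithinAt
  have hg0 : g 0 = 0 := by
    simp [hg]
  -- exp (g z) = p z
  have hexp : ∀ z ∈ unitDisk, Complex.exp (g z) = p z := by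
    intro z hz
    set φ : ℝ → ℂ := fun s => z * h ((s:ℂ) * z) with hφ
    set G : ℝ → ℂ := fun r => ∫ t in (0:ℝ)..r, φ t with hG
    have hint : ∀ r ∈ Icc (0:ℝ) 1, IntervalIntegrable φ MeasureTheory.volume 0 r := by
      intro r hr
      apply ContinuousOn.intervalIntegrable
      apply (hφcOn z hz).mono
      intro t htmem
      rw [uIcc_of_le hr.1] at htmem
      exact ⟨by linarith [htmem.1], le_trans htmem.2 hr.2⟩
    have hGd : ∀ r ∈ Icc (0:ℝ) 1, HasDerivAt G (φ r) r := by
      intro r hr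
      apply intervalIntegral.integral_hasDerivAt_right (hint r hr)
      · refine ContinuousAt.stronglyMeasurableAtFilter
          (s := {s : ℝ | (s:ℂ) * z ∈ unitDisk}) ?_ ?_ r ?_
        · exact (isOpen_ball (α := ℂ)).preimage (by fun_prop)
        · intro s hs; exact hφc z s hs
        · exact hmem z hz r (by rw [abs_le]; exact ⟨by linarith [hr.1], hr.2⟩)
      · exact hφc z r (hmem z hz r (by rw [abs_le]; exact ⟨by linarith [hr.1], hr.2⟩))
    set Φ : ℝ → ℂ := fun r => Complex.exp (-G r) * p ((r:ℂ) * z) with hΦ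
    have hpc : ∀ r ∈ Icc (0:ℝ) 1, HasDerivAt (fun s : ℝ => p ((s:ℂ) * z))
        (z * deriv p ((r:ℂ)*z)) r := by
      intro r hr
      have h1 : HasDerivAt (fun s : ℝ => (s:ℂ) * z) z r := by
        simpa using (Complex.ofRealCLM.hasDerivAt (x := r)).mul_const z
      have h2 : HasDerivAt p (deriv p ((r:ℂ)*z)) ((r:ℂ)*z) :=
        (hp.differentiableAt (hopen.mem_nhds (hmem z hz r (by rw [abs_le]; exact ⟨by linarith [hr.1], hr.2⟩)))).hasDerivAt
      have := h2.scomp r h1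
      simpa [smul_eq_mul, mul_comm, Function.comp_def] using this
    have hΦd : ∀ r ∈ Icc (0:ℝ) 1, HasDerivAt Φ 0 r := by
      intro r hr
      have hG' := hGd r hr
      have hE : HasDerivAt (fun s : ℝ => Complex.exp (-G s)) (-φ r * Complex.exp (-G r)) r := by
        have hneg : HasDerivAt (fun s : ℝ => -G s) (-φ r) r := hG'.neg
        have := (Complex.hasDerivAt_exp (-G r)).scomp r hneg
        simpa [smul_eq_mul, mul_comm, Function.comp_def] using this
      have : HasDerivAt (fun s : ℝ => Complex.exp (-G s) * p ((s:ℂ) * z)) _ r := hE.mul (hpc r hr)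
      have hmemr : (r:ℂ) * z ∈ unitDisk := hmem z hz r (by rw [abs_le]; exact ⟨by linarith [hr.1], hr.2⟩)
      have hps : h ((r:ℂ)*z) * p ((r:ℂ)*z) = deriv p ((r:ℂ)*z) :=
        div_mul_cancel₀ _ (hpne _ hmemr)
      convert this using 1
      simp only [hφ]
      rw [← hps]
      ring
    have hΦcont : ContinuousOn Φ (Icc 0 1) :=
      fun r hr => ((hΦd r hr).continuousAt).continuousWithinAt
    have hconst := constant_of_has_deriv_right_zero hΦcont
      (fun r hr => ((hΦd r (Ico_subset_Icc_self hr)).hasDerivWithinAt))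
    have h10 : Φ 1 = Φ 0 := hconst 1 (by norm_num)
    have hΦ0 : Φ 0 = 1 := by
      simp [hΦ, hG, hp0]
    have hG1 : G 1 = g z := rfl
    rw [hΦ0] at h10
    have : Complex.exp (-g z) * p z = 1 := by
      simpa [hΦ, hG1] using h10
    have := congrArg (fun w => Complex.exp (g z) * w) this
    simp only [mul_one] at this
    rw [← this, ← mul_assoc, ← Complex.exp_add] at *
    simpa using this
  -- continuity of g
  have hgc : ContinuousOn g unitDisk := by
    intro z₀ hz₀
    apply ContinuousAt.continuousWithinAt
    have hz₀n : ‖z₀‖ < 1 := by simpa [unitDisk, mem_ball, dist_zero_right] using hz₀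
    set r : ℝ := (1 + ‖z₀‖)/2 with hr
    have hr1 : r < 1 := by rw [hr]; linarith
    have hr0 : 0 < r := by rw [hr]; positivity
    have hz₀r : ‖z₀‖ < r := by rw [hr]; linarith
    have hsubD : closedBall (0:ℂ) r ⊆ unitDisk := closedBall_subset_ball hr1
    obtain ⟨M, hM⟩ := (isCompact_closedBall (0:ℂ) r).exists_bound_of_continuousOn
      (hcont.mono hsubD)
    have hball : Metric.ball (0:ℂ) r ∈ 𝓝 z₀ :=
      (isOpen_ball).mem_nhds (mem_ball_zero_iff.mpr hz₀r)
    have hmemt : ∀ z ∈ Metric.ball (0:ℂ) r, ∀ t ∈ Set.uIoc (0:ℝ) 1, ((t:ℂ) * z ∈ unitDisk ∧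
        (t:ℂ) * z ∈ closedBall (0:ℂ) r) := by
      intro z hzb t htm
      rw [uIoc_of_le (by norm_num : (0:ℝ) ≤ 1)] at htm
      have hzb' : ‖z‖ < r := by simpa [mem_ball, dist_zero_right] using hzb
      have h1 : ‖(t:ℂ) * z‖ ≤ ‖z‖ := by
        rw [norm_mul, Complex.norm_real, Real.norm_eq_abs, abs_of_pos htm.1]
        nlinarith [norm_nonneg z, htm.2]
      constructor
      · simp only [unitDisk, mem_ball, dist_zero_right]; linarith
      · simp only [mem_closedBall, dist_zero_right]; linarith
    apply intervalIntegral.continuousAt_of_dominated_interval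
      (bound := fun _ => r * M)
    · filter_upwards [hball] with z hzb
      apply ContinuousOn.aestronglyMeasurable _ measurableSet_uIoc
      intro t htm
      exact (hφc z t ((hmemt z hzb t htm).1)).continuousWithinAt
    · filter_upwards [hball] with z hzb
      apply MeasureTheory.ae_of_all
      intro t htm
      obtain ⟨h1, h2⟩ := hmemt z hzb t htm
      have hzb' : ‖z‖ < r := by simpa [mem_ball, dist_zero_right] using hzb
      rw [norm_mul]
      have := hM _ h2
      have h0M : 0 ≤ M := le_trans (norm_nonneg _) this
      exact mul_le_mul hzb'.le this (norm_nonneg _) hr0.le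
    · exact intervalIntegrable_const
    · apply MeasureTheory.ae_of_all
      intro t htm
      have ht1 : (t:ℂ) * z₀ ∈ unitDisk := by
        have := hmemt z₀ (by simpa [mem_ball, dist_zero_right] using hz₀r) t htm
        exact this.1
      have hin : ContinuousAt (fun z : ℂ => (t:ℂ) * z) z₀ := by fun_prop
      exact continuousAt_id.mul
        (ContinuousAt.comp (g := h) (f := fun z : ℂ => (t:ℂ) * z) (hhca _ ht1) hin)
  -- differentiability of g
  have hgd : ∀ z₀ ∈ unitDisk, HasDerivAt g (deriv p z₀ / p z₀) z₀ := by
    intro z₀ hz₀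
    have hpz : p z₀ ≠ 0 := hpne _ hz₀
    set c := p z₀ with hc
    set a := g z₀ with ha
    set LP : ℂ → ℂ := fun z => a + Complex.log (p z / c) with hLP
    have hpdiff : DifferentiableAt ℂ p z₀ := hp.differentiableAt (hopen.mem_nhds hz₀)
    have hpca : ContinuousAt p z₀ := hpdiff.continuousAt
    have hpd : HasDerivAt p (deriv p z₀) z₀ := hpdiff.hasDerivAt
    have hdiv : HasDerivAt (fun z => p z / c) (deriv p z₀ / c) z₀ := hpd.div_const c
    have hone : p z₀ / c = 1 := div_self hpz
    have h1slit : (1:ℂ) ∈ Complex.slitPlane := by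
      simp [Complex.mem_slitPlane_iff]
    have hlog : HasDerivAt Complex.log (1:ℂ)⁻¹ (p z₀ / c) := by
      rw [hone]; exact Complex.hasDerivAt_log h1slit
    have hLPd : HasDerivAt LP ((1:ℂ)⁻¹ * (deriv p z₀ / c)) z₀ := by
      have hcomp := HasDerivAt.comp (h := fun z => p z / c) (h₂ := Complex.log) z₀ hlog hdiv
      exact hcomp.const_add a
    have hev : LP =ᶠ[𝓝 z₀] g := by
      have e1 : ∀ᶠ z in 𝓝 z₀, z ∈ unitDisk := hopen.eventually_mem hz₀
      have e2 : ∀ᶠ z in 𝓝 z₀, p z / c ∈ Complex.slitPlane := by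
        have hca : ContinuousAt (fun z => p z / c) z₀ := hpca.div_const c
        have hmemn : Complex.slitPlane ∈ 𝓝 (p z₀ / c) := by
          rw [hone]; exact Complex.isOpen_slitPlane.mem_nhds h1slit
        exact hca hmemn
      have hdc : ContinuousAt (fun z => g z - LP z) z₀ := by
        apply ContinuousAt.sub
        · exact hgc.continuousAt (hopen.mem_nhds hz₀)
        · exact continuousAt_const.add
            ((continuousAt_clog (by rw [hone]; exact h1slit)).comp (hpca.div_const c))
      have hd0 : g z₀ - LP z₀ = 0 := by
        simp [hLP, hone, Complex.log_one, ← ha]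
      have htend : Filter.Tendsto (fun z => g z - LP z) (𝓝 z₀) (𝓝 0) := by
        rw [← hd0]; exact hdc
      have e3 : ∀ᶠ z in 𝓝 z₀, ‖g z - LP z‖ < 6 := by
        have := htend (Metric.ball_mem_nhds 0 (by norm_num : (0:ℝ) < 6))
        filter_upwards [this] with z hzm
        simpa [mem_ball, dist_zero_right] using hzm
      filter_upwards [e1, e2, e3] with z h1 h2 h3
      have hpzc : p z / c ≠ 0 := Complex.slitPlane_ne_zero h2
      have hexpa : Complex.exp a = c := hexp z₀ hz₀
      have hexpLP : Complex.exp (LP z) = p z := by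
        rw [hLP]
        simp only []
        rw [Complex.exp_add, Complex.exp_log hpzc, hexpa]
        field_simp
      have hexpg : Complex.exp (g z) = p z := hexp z h1
      have hdd : Complex.exp (g z - LP z) = 1 := by
        rw [Complex.exp_sub, hexpLP, hexpg, div_self (hpne z h1)]
      obtain ⟨n, hn⟩ := Complex.exp_eq_one_iff.mp hdd
      have hn0 : n = 0 := by
        by_contra hne0
        have h1n : (1:ℝ) ≤ |(n:ℝ)| := by exact_mod_cast Int.one_le_abs hne0
        rw [hn] at h3
        have hnn : ‖(n:ℂ) * (2 * (Real.pi:ℂ) * Complex.I)‖ = |(n:ℝ)| * (2 * Real.pi) := by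
          rw [norm_mul, norm_mul, norm_mul, Complex.norm_I, Complex.norm_intCast,
            Complex.norm_real]
          simp only [Real.norm_eq_abs, abs_of_pos Real.pi_pos, Int.cast_abs, mul_one]
          rw [show ‖(2:ℂ)‖ = (2:ℝ) by norm_num]
        rw [hnn] at h3
        nlinarith [Real.pi_gt_three]
      rw [hn0] at hn
      simp at hn
      exact (sub_eq_zero.mp hn).symm
    have hfinal := hLPd.congr_of_eventuallyEq hev.symm
    simpa using hfinal
  exact ⟨g, hg0, hgc, hexp, hgd⟩


theorem stmt_4 (β : ℝ)
    (hβ : (Real.exp 1 + 2 - Real.sqrt 2 * (Real.exp 1 - 1)) / (Real.sqrt 2 - 1) ≤ β)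
    (p : ℂ → ℂ) (hp : DifferentiableOn ℂ p unitDisk) (hp0 : p 0 = 1)
    (hpne : ∀ z ∈ unitDisk, p z ≠ 0)
    (hsub : Subord (fun z => p z + (β : ℂ) * z * deriv p z / p z)
      (fun z => (2 + 2 * z) / (2 - z))) :
    Subord p Complex.exp := by
  obtain ⟨g, hg0, hgc, hgexp, hgd⟩ := exists_log hp hp0 hpne
  have hopen : IsOpen unitDisk := isOpen_ball
  obtain ⟨w, hwd, hw0, hwlt, hweq⟩ := hsub
  have hq : ∀ z ∈ unitDisk, ‖p z + (β:ℂ) * z * deriv p z / p z - 2‖ < 2 := by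
    intro z hz
    have h1 := hweq z hz
    simp only at h1
    rw [h1]
    exact mobius_bound (hwlt z hz)
  have hbound : ∀ z ∈ unitDisk, ‖g z‖ < 1 := by
    by_contra hcon
    push_neg at hcon
    obtain ⟨z1, hz1D, hz1⟩ := hcon
    have hz1n : ‖z1‖ < 1 := mem_ball_zero_iff.mp hz1D
    set C := Metric.closedBall (0:ℂ) ‖z1‖ with hC
    have hCD : C ⊆ unitDisk := closedBall_subset_ball hz1n
    set K := {z ∈ C | 1 ≤ ‖g z‖} with hK
    have hKc : IsCompact K := by
      apply (isCompact_closedBall (0:ℂ) ‖z1‖).of_isClosed_subset ?_ (Set.sep_subset _ _)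
      have hKeq : K = C ∩ (fun z => ‖g z‖) ⁻¹' (Ici 1) := by
        ext z; simp [hK, Set.mem_sep_iff, Set.mem_inter_iff]
      have hKcl : IsClosed (C ∩ (fun z => ‖g z‖) ⁻¹' (Ici 1)) :=
        ContinuousOn.preimage_isClosed_of_isClosed
          ((hgc.mono hCD).norm) Metric.isClosed_closedBall isClosed_Ici
      rw [← hKeq] at hKcl
      exact hKcl
    have hKne : K.Nonempty :=
      ⟨z1, ⟨by simp [hC, mem_closedBall, dist_zero_right], hz1⟩⟩
    obtain ⟨z0, hz0K, hz0min⟩ := hKc.exists_isMinOn hKne continuous_norm.continuousOn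
    rw [isMinOn_iff] at hz0min
    set r := ‖z0‖ with hr
    have hrr1 : r ≤ ‖z1‖ := by
      have := hz0K.1
      simpa [hC, mem_closedBall, dist_zero_right] using this
    have hr1 : r < 1 := lt_of_le_of_lt hrr1 hz1n
    have hz0D : z0 ∈ unitDisk := mem_ball_zero_iff.mpr hr1
    have hglt : ∀ z : ℂ, ‖z‖ < r → ‖g z‖ < 1 := by
      intro z hzr
      by_contra hge
      push_neg at hge
      have hzK : z ∈ K := ⟨by simp only [hC, mem_closedBall, dist_zero_right]; linarith, hge⟩
      exact absurd (hz0min z hzK) (not_le.mpr hzr)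
    have hgle : ∀ z : ℂ, ‖z‖ ≤ r → ‖g z‖ ≤ 1 := by
      intro z hzr
      rcases lt_or_eq_of_le hzr with hlt | heq
      · exact (hglt z hlt).le
      · by_cases hz0' : z = 0
        · simp [hz0', hg0]
        have hzpos : 0 < ‖z‖ := norm_pos_iff.mpr hz0'
        have hzD : z ∈ unitDisk := mem_ball_zero_iff.mpr (by rw [heq]; exact hr1)
        have hct : ContinuousAt g z := hgc.continuousAt (hopen.mem_nhds hzD)
        have h1 : Tendsto (fun t : ℝ => (t:ℂ) * z) (𝓝 (1:ℝ)) (𝓝 z) := by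
          have := (Complex.continuous_ofReal.tendsto (1:ℝ)).mul_const z
          simpa using this
        have htt : Tendsto (fun t : ℝ => ‖g ((t:ℂ) * z)‖) (𝓝[<] (1:ℝ)) (𝓝 ‖g z‖) :=
          ((hct.tendsto.comp h1).norm).mono_left nhdsWithin_le_nhds
        apply le_of_tendsto htt
        filter_upwards [Ioo_mem_nhdsLT_of_mem (⟨zero_lt_one, le_refl (1:ℝ)⟩ : (1:ℝ) ∈ Ioc 0 1)] with t ht
        have hlt' : ‖(t:ℂ) * z‖ < r := by
          rw [norm_mul, Complex.norm_real, Real.norm_eq_abs, abs_of_pos ht.1, ← heq]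
          nlinarith [ht.2]
        exact (hglt _ hlt').le
    have hgz0 : ‖g z0‖ = 1 := le_antisymm (hgle z0 le_rfl) hz0K.2
    have hz0ne : z0 ≠ 0 := by
      intro h0
      rw [h0, hg0] at hgz0
      simp at hgz0
    have hr0 : 0 < r := norm_pos_iff.mpr hz0ne
    set ζ := g z0 with hζdef
    have hζ : ‖ζ‖ = 1 := hgz0
    have hζ0 : ζ ≠ 0 := by
      intro h0; rw [h0] at hζ; simp at hζ
    set ψ : ℂ → ℂ := fun u => g (u * z0) / ζ with hψ
    have hmemD : ∀ u : ℂ, ‖u‖ ≤ 1 → u * z0 ∈ unitDisk := by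
      intro u hu
      have : ‖u * z0‖ < 1 := by rw [norm_mul]; nlinarith [norm_nonneg u]
      exact mem_ball_zero_iff.mpr this
    have hψd : ∀ u : ℂ, ‖u‖ ≤ 1 → HasDerivAt ψ (deriv p (u*z0) / p (u*z0) * z0 / ζ) u := by
      intro u hu
      have h1 : HasDerivAt (fun v : ℂ => v * z0) z0 u := by
        simpa using (hasDerivAt_id u).mul_const z0
      have h2 := hgd (u * z0) (hmemD u hu)
      have h3 := HasDerivAt.comp (h₂ := g) (h := fun v => v * z0) u h2 h1
      exact h3.div_const ζ
    set κ := deriv p z0 / p z0 * z0 / ζ with hκdef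
    have hκd : HasDerivAt ψ κ 1 := by
      have := hψd 1 (by norm_num)
      simpa using this
    have hψdiff : DifferentiableOn ℂ ψ (Metric.ball 0 1) := fun u hu =>
      ((hψd u (mem_ball_zero_iff.mp hu).le).differentiableAt).differentiableWithinAt
    have hψmaps : Set.MapsTo ψ (Metric.ball 0 1) (Metric.ball 0 1) := by
      intro u hu
      rw [mem_ball_zero_iff] at hu ⊢
      have : ‖ψ u‖ = ‖g (u * z0)‖ := by
        rw [hψ]; simp only [norm_div, hζ, div_one]
      rw [this]
      apply hglt
      rw [norm_mul]
      nlinarith [norm_nonneg u]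
    have hψ0 : ψ 0 = 0 := by simp [hψ, hg0]
    have hψ1 : ψ 1 = 1 := by
      rw [hψ]; simp only [one_mul]; exact div_self hζ0
    have hSchwarz : ∀ t : ℝ, t ∈ Ioo (0:ℝ) 1 → ‖ψ ((t:ℝ):ℂ)‖ ≤ t := by
      intro t ht
      have := Complex.norm_le_norm_of_mapsTo_ball hψdiff (hψmaps.mono_right ball_subset_closedBall) hψ0
        (z := ((t:ℝ):ℂ)) (by rw [Complex.norm_real, Real.norm_eq_abs, abs_of_pos ht.1]; exact ht.2)
      rw [Complex.norm_real, Real.norm_eq_abs, abs_of_pos ht.1] at this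
      exact this
    have hκre : 1 ≤ κ.re := by
      have hslope := hasDerivAt_iff_tendsto_slope.mp hκd
      have hmap : Tendsto (fun t : ℝ => ((t:ℝ):ℂ)) (𝓝[<] (1:ℝ)) (𝓝[≠] (1:ℂ)) := by
        apply tendsto_nhdsWithin_of_tendsto_nhds_of_eventually_within
        · have h1 : Tendsto (fun t : ℝ => ((t:ℝ):ℂ)) (𝓝 (1:ℝ)) (𝓝 ((1:ℝ):ℂ)) :=
            Complex.continuous_ofReal.tendsto 1
          simpa using h1.mono_left nhdsWithin_le_nhds
        · filter_upwards [self_mem_nhdsWithin] with t ht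
          simp only [Set.mem_Iio] at ht
          simp only [Set.mem_compl_iff, Set.mem_singleton_iff]
          intro hcontra
          rw [show (1:ℂ) = ((1:ℝ):ℂ) by norm_num] at hcontra
          exact absurd (Complex.ofReal_inj.mp hcontra) (ne_of_lt ht)
      have h2 := hslope.comp hmap
      have h3 := (Complex.continuous_re.tendsto κ).comp h2
      apply ge_of_tendsto h3
      filter_upwards [Ioo_mem_nhdsLT_of_mem (⟨zero_lt_one, le_refl (1:ℝ)⟩ : (1:ℝ) ∈ Ioc 0 1)] with t ht
      have ht1 : (0:ℝ) < 1 - t := by linarith [ht.2]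
      have hsl : slope ψ 1 ((t:ℝ):ℂ) = (1 - ψ ((t:ℝ):ℂ)) / (((1 - t : ℝ)):ℂ) := by
        rw [slope_def_field, hψ1]
        rw [show ψ ((t:ℝ):ℂ) - 1 = -(1 - ψ ((t:ℝ):ℂ)) by ring,
            show ((t:ℝ):ℂ) - 1 = -((((1 - t : ℝ)):ℂ)) by push_cast; ring,
            neg_div_neg_eq]
      show 1 ≤ (slope ψ 1 ((t:ℝ):ℂ)).re
      rw [hsl, Complex.div_ofReal_re]
      rw [Complex.sub_re, Complex.one_re]
      have hretle : (ψ ((t:ℝ):ℂ)).re ≤ t := by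
        calc (ψ ((t:ℝ):ℂ)).re ≤ ‖ψ ((t:ℝ):ℂ)‖ := Complex.re_le_norm _
          _ = ‖ψ ((t:ℝ):ℂ)‖ := rfl
          _ ≤ t := hSchwarz t ht
      rw [le_div_iff₀ ht1]
      linarith
    have hκim : κ.im = 0 := by
      set e : ℝ → ℂ := fun θ => Complex.exp ((θ:ℂ) * Complex.I) with he
      have he0 : e 0 = 1 := by simp [he]
      have hed : HasDerivAt e Complex.I 0 := by
        have h1 : HasDerivAt (fun θ : ℝ => (θ:ℂ) * Complex.I) Complex.I 0 := by
          simpa using (Complex.ofRealCLM.hasDerivAt (x := (0:ℝ))).mul_const Complex.I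
        have h2 := (Complex.hasDerivAt_exp (((0:ℝ):ℂ) * Complex.I)).scomp 0 h1
        simpa [he, Function.comp_def] using h2
      have hw : HasDerivAt (fun θ : ℝ => ψ (e θ)) (Complex.I * κ) 0 := by
        have hκd' : HasDerivAt ψ κ (e 0) := by rw [he0]; exact hκd
        have h2 := hκd'.scomp 0 hed
        simpa [smul_eq_mul, mul_comm, Function.comp_def] using h2
      have hre : HasDerivAt (fun θ : ℝ => (ψ (e θ)).re) ((Complex.I * κ).re) 0 :=
        Complex.reCLM.hasFDerivAt.comp_hasDerivAt 0 hw
      have him : HasDerivAt (fun θ : ℝ => (ψ (e θ)).im) ((Complex.I * κ).im) 0 :=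
        Complex.imCLM.hasFDerivAt.comp_hasDerivAt 0 hw
      have hFd : HasDerivAt (fun θ : ℝ => Complex.normSq (ψ (e θ))) (-2 * κ.im) 0 := by
        have hmm : HasDerivAt (fun θ : ℝ => (ψ (e θ)).re * (ψ (e θ)).re + (ψ (e θ)).im * (ψ (e θ)).im) _ 0 := (hre.mul hre).add (him.mul him)
        have heq : (fun θ : ℝ => (ψ (e θ)).re * (ψ (e θ)).re + (ψ (e θ)).im * (ψ (e θ)).im)
            = fun θ : ℝ => Complex.normSq (ψ (e θ)) := by
          funext θ; rw [Complex.normSq_apply]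
        rw [heq] at hmm
        convert hmm using 1
        rw [he0, hψ1]
        simp [Complex.mul_re, Complex.mul_im]
        ring
      have hmax : IsLocalMax (fun θ : ℝ => Complex.normSq (ψ (e θ))) 0 := by
        apply Filter.Eventually.of_forall
        intro θ
        simp only
        rw [he0, hψ1, Complex.normSq_one]
        have h1 : ‖e θ‖ = 1 := by
          rw [he]
          simp only [Complex.norm_exp]
          simp
        have h3 : ‖e θ * z0‖ ≤ r := by rw [norm_mul, h1, one_mul]
        have h2 : ‖ψ (e θ)‖ ≤ 1 := by
          have h4 := hgle _ h3
          rw [hψ]; simp only [norm_div, hζ, div_one]; exact h4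
        have := Complex.normSq_eq_norm_sq (ψ (e θ))
        nlinarith [norm_nonneg (ψ (e θ))]
      have hderiv0 := hmax.deriv_eq_zero
      rw [hFd.deriv] at hderiv0
      linarith
    -- contradiction
    have hfin := hq z0 hz0D
    have hκζ : κ * ζ = deriv p z0 / p z0 * z0 := div_mul_cancel₀ _ hζ0
    have hrw : p z0 + (β:ℂ) * z0 * deriv p z0 / p z0 - 2
        = Complex.exp ζ + ((β * κ.re : ℝ):ℂ) * ζ - 2 := by
      have hκval : κ = ((κ.re:ℝ):ℂ) := by
        apply Complex.ext
        · simp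
        · simp [hκim]
      have h2 : (β:ℂ) * z0 * deriv p z0 / p z0 = ((β * κ.re : ℝ):ℂ) * ζ := by
        calc (β:ℂ) * z0 * deriv p z0 / p z0
            = (β:ℂ) * (deriv p z0 / p z0 * z0) := by ring
          _ = (β:ℂ) * (κ * ζ) := by rw [hκζ]
          _ = ((β * κ.re : ℝ):ℂ) * ζ := by nth_rewrite 1 [hκval]; push_cast; ring
      rw [h2, ← hgexp z0 hz0D]
    rw [hrw] at hfin
    have hβ4 : (4:ℝ) ≤ β := le_trans beta0_ge4 hβ
    have hs4 : (4:ℝ) ≤ β * κ.re := by nlinarith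
    exact absurd hfin (not_lt.mpr (key_ineq hζ hs4))
  exact ⟨g, fun z hz => (hgd z hz).differentiableAt.differentiableWithinAt, hg0, hbound,
    fun z hz => (hgexp z hz).symm⟩
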